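/- Define θ⁺(t) = arcsin(e^{2t}) for t < 0. Then for every point of the arc C_{θ⁺(t)} ∩ B² with height y satisfying (1 − cos θ⁺)/sin θ⁺ ≤ y ≤ sin θ⁺, one has y·(θ⁺)'(t)/sin θ⁺(t) − tan θ⁺(t) ≥ 0; that is, the inward normal speed of C_{θ⁺(t)} is at least its curvature. -/

import Mathlib

/-- The circles `C_{θ⁺(t)}` with `θ⁺(t) = arcsin(e^{2t})` form a supersolution barrier:
at any point of height `y` on the arc, the inward normal speed `y·(θ⁺)'(t)/sin θ⁺`
is at least the curvature `tan θ⁺`. -/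
theorem upper_circle_barrier {t y : ℝ} (ht : t < 0)
    (hy1 : (1 - Real.cos (Real.arcsin (Real.exp (2 * t)))) / Real.sin (Real.arcsin (Real.exp (2 * t))) ≤ y)
    (hy2 : y ≤ Real.sin (Real.arcsin (Real.exp (2 * t)))) :
    y * deriv (fun s : ℝ => Real.arcsin (Real.exp (2 * s))) t
        / Real.sin (Real.arcsin (Real.exp (2 * t)))
      - Real.tan (Real.arcsin (Real.exp (2 * t))) ≥ 0 := by
  set u := Real.exp (2 * t) with hu
  have hu0 : 0 < u := Real.exp_pos _
  have hu1 : u < 1 := by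
    rw [hu]
    have : 2 * t < 0 := by linarith
    simpa using Real.exp_lt_one_iff.mpr this
  have hune : u ≠ 1 := ne_of_lt hu1
  have hune' : u ≠ -1 := by linarith
  -- derivative
  have hd : HasDerivAt (fun s : ℝ => Real.arcsin (Real.exp (2 * s)))
      (1 / Real.sqrt (1 - u ^ 2) * (2 * u)) t := by
    have h1 : HasDerivAt (fun s : ℝ => Real.exp (2 * s)) (2 * u) t := by
      have h0 : HasDerivAt (fun s : ℝ => 2 * s) 2 t := by simpa using (hasDerivAt_id t).const_mul 2
      simpa [hu, mul_comm] using h0.exp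
    exact (Real.hasDerivAt_arcsin hune' hune).comp t h1
  rw [hd.deriv]
  have hsin : Real.sin (Real.arcsin u) = u := Real.sin_arcsin (by linarith) hu1.le
  have hcos : Real.cos (Real.arcsin u) = Real.sqrt (1 - u ^ 2) := Real.cos_arcsin u
  have hs0 : 0 < Real.sqrt (1 - u ^ 2) := Real.sqrt_pos.mpr (by nlinarith)
  have htan : Real.tan (Real.arcsin u) = u / Real.sqrt (1 - u ^ 2) := by
    rw [Real.tan_eq_sin_div_cos, hsin, hcos]
  rw [hsin, htan]
  -- key: 2y ≥ u
  have hc1 : Real.sqrt (1 - u ^ 2) ≤ 1 := by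
    calc Real.sqrt (1 - u ^ 2) ≤ Real.sqrt 1 := Real.sqrt_le_sqrt (by nlinarith)
    _ = 1 := Real.sqrt_one
  have hsq : Real.sqrt (1 - u ^ 2) ^ 2 = 1 - u ^ 2 := Real.sq_sqrt (by nlinarith)
  have hkey : u ≤ 2 * y := by
    have h1 : (1 - Real.sqrt (1 - u ^ 2)) / u ≤ y := by rwa [hcos, hsin] at hy1
    have h2 : 1 - Real.sqrt (1 - u ^ 2) ≤ y * u := by
      have := (div_le_iff₀ hu0).mp h1; linarith
    nlinarith [hsq, hs0]
  have : y * (1 / Real.sqrt (1 - u ^ 2) * (2 * u)) / u - u / Real.sqrt (1 - u ^ 2)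
      = (2 * y - u) / Real.sqrt (1 - u ^ 2) := by
    field_simp
  rw [this]
  exact div_nonneg (by linarith) hs0.le
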